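/- Let p ∈ U. The open cell C(p) is a bounded subset of ℝ^{n+1} if and only if for every vertex i ∈ V that is not p-equivalent to the vertex n+1, there exist a vertex i' with i' ∼_p i and a vertex j adjacent to i' such that p_{i'} > p_j. (Equivalently: C(p) belongs to the bounded complex of the restricted graphical arrangement iff the acyclic orientation induced by p on the contraction G/p has the class of n+1 as its unique sink.) -/

import Mathlib

open Finset

/-- The vertex-induced subgraph on `S` of the multigraph with edge-multiplicity
function `μ` is connected: any two vertices of `S` are joined by a walk inside `S`. -/
def ConnectedOn {n : ℕ} (μ : Fin (n + 1) → Fin (n + 1) → ℕ) (S : Set (Fin (n + 1))) : Prop :=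
  ∀ i ∈ S, ∀ j ∈ S, Relation.ReflTransGen (fun a b => a ∈ S ∧ b ∈ S ∧ 1 ≤ μ a b) i j

/-- The affine subspace `U = { x ∈ ℝ^{n+1} : x_{n+1} = 0, x_1 + ⋯ + x_n = 1 }`. -/
def U (n : ℕ) : Set (Fin (n + 1) → ℝ) :=
  {x | x (Fin.last n) = 0 ∧ ∑ i : Fin n, x i.castSucc = 1}

/-- The open cell of `p` in the restriction of the graphical arrangement of `μ` to `U`. -/
def openCell {n : ℕ} (μ : Fin (n + 1) → Fin (n + 1) → ℕ) (p : Fin (n + 1) → ℝ) :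
    Set (Fin (n + 1) → ℝ) :=
  {q | q ∈ U n ∧ ∀ i j, 1 ≤ μ i j →
    ((q i < q j ↔ p i < p j) ∧ (q i = q j ↔ p i = p j))}

/-- The closed cell of `p` in the restriction of the graphical arrangement of `μ` to `U`. -/
def closedCell {n : ℕ} (μ : Fin (n + 1) → Fin (n + 1) → ℕ) (p : Fin (n + 1) → ℝ) :
    Set (Fin (n + 1) → ℝ) :=
  {q | q ∈ U n ∧ ∀ i j, 1 ≤ μ i j →
    ((p i < p j → q i ≤ q j) ∧ (p i = p j → q i = q j))}

/-- `p`-equivalence: `i ∼_p j` iff there is a path in the graph along which `p` is constant. -/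
def pEquiv {n : ℕ} (μ : Fin (n + 1) → Fin (n + 1) → ℕ) (p : Fin (n + 1) → ℝ)
    (i j : Fin (n + 1)) : Prop :=
  Relation.ReflTransGen (fun a b => 1 ≤ μ a b ∧ p a = p b) i j

/-- `d_I(i)`: the number of edges from vertex `i` to the complement of `I`. -/
def dI {n : ℕ} (μ : Fin (n + 1) → Fin (n + 1) → ℕ) (I : Finset (Fin (n + 1)))
    (i : Fin (n + 1)) : ℕ :=
  ∑ j ∈ Iᶜ, μ i j

/-- `ε_I(i) = d_I(i)` for `i ∈ I` and `0` otherwise. -/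
def epsI {n : ℕ} (μ : Fin (n + 1) → Fin (n + 1) → ℕ) (I : Finset (Fin (n + 1)))
    (i : Fin (n + 1)) : ℕ :=
  if i ∈ I then dI μ I i else 0

/-- The point `(1/|I|) · e_I`, where `e_I` is the 0/1 indicator vector of `I`. -/
noncomputable def qI {n : ℕ} (I : Finset (Fin (n + 1))) : Fin (n + 1) → ℝ :=
  fun i => if i ∈ I then 1 / (I.card : ℝ) else 0

/-- `D_i(p)`: the number of edges `ij` with `p_i > p_j`. -/
noncomputable def Dlab {n : ℕ} (μ : Fin (n + 1) → Fin (n + 1) → ℕ) (p : Fin (n + 1) → ℝ) (i : Fin n) : ℕ :=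
  ∑ j ∈ Finset.univ.filter (fun j => p j < p i.castSucc), μ i.castSucc j

/-- The monomial `m_I = ∏_{i ∈ [n]} x_i^{ε_I(i)}`. -/
noncomputable def mI {n : ℕ} (k : Type*) [Field k] (μ : Fin (n + 1) → Fin (n + 1) → ℕ)
    (I : Finset (Fin (n + 1))) : MvPolynomial (Fin n) k :=
  ∏ i : Fin n, MvPolynomial.X i ^ epsI μ I i.castSucc

/-- The monomial ideal `M_G = ⟨ m_I : ∅ ≠ I ⊆ [n] ⟩`. -/
noncomputable def MG {n : ℕ} (k : Type*) [Field k] (μ : Fin (n + 1) → Fin (n + 1) → ℕ) :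
    Ideal (MvPolynomial (Fin n) k) :=
  Ideal.span {f | ∃ I : Finset (Fin (n + 1)), I.Nonempty ∧ Fin.last n ∉ I ∧ f = mI k μ I}

section aux
variable {n : ℕ} {μ : Fin (n + 1) → Fin (n + 1) → ℕ} {p : Fin (n + 1) → ℝ}

lemma pEquiv_p_eq {a b : Fin (n+1)} (h : pEquiv μ p a b) : p a = p b := by
  induction h with
  | refl => rfl
  | tail _ h ih => exact ih.trans h.2

lemma pEquiv_q_eq {q : Fin (n+1) → ℝ} {a b : Fin (n+1)} (hq : q ∈ openCell μ p)
    (h : pEquiv μ p a b) : q a = q b := by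
  induction h with
  | refl => rfl
  | tail _ h ih => exact ih.trans (((hq.2 _ _ h.1).2).mpr h.2)

lemma exists_crossing {α : Type*} {r : α → α → Prop} {D : Set α} {b : α} (hb : b ∉ D) :
    ∀ {a : α}, Relation.ReflTransGen r a b → a ∈ D → ∃ u w, u ∈ D ∧ w ∉ D ∧ r u w := by
  intro a hab
  induction hab using Relation.ReflTransGen.head_induction_on with
  | refl => exact fun ha => absurd ha hb
  | @head a c h' h ih =>
    intro ha
    by_cases hc : c ∈ D
    · exact ih hc
    · exact ⟨a, c, ha, hc, h'⟩

end aux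
set_option maxHeartbeats 1000000 in
/-- `C(p)` is bounded iff every vertex `i` not `p`-equivalent to `n+1`
has a `p`-equivalent vertex `i'` with a neighbour `j` of strictly smaller `p`-value. -/
theorem stmt0 {n : ℕ} (hn : 1 ≤ n) (μ : Fin (n + 1) → Fin (n + 1) → ℕ)
    (hsym : ∀ i j, μ i j = μ j i) (hloop : ∀ i, μ i i = 0)
    (hconn : ConnectedOn μ Set.univ)
    (p : Fin (n + 1) → ℝ) (hp : p ∈ U n) :
    Bornology.IsBounded (openCell μ p) ↔
      ∀ i : Fin (n + 1), ¬ pEquiv μ p i (Fin.last n) →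
        ∃ i' j : Fin (n + 1), pEquiv μ p i i' ∧ 1 ≤ μ i' j ∧ p j < p i' := by
  classical
  constructor
  · -- bounded → condition
    intro hB
    by_contra hcon
    push_neg at hcon
    obtain ⟨i, hine, hsink⟩ := hcon
    -- hsink : ∀ i' j, pEquiv μ p i i' → 1 ≤ μ i' j → p i' ≤ p j
    set DK : Set (Fin (n+1)) :=
      {x | Relation.ReflTransGen (fun a b => 1 ≤ μ a b ∧ p b ≤ p a) (Fin.last n) x} with hDKdef
    set D : Set (Fin (n+1)) := {x | pEquiv μ p i x} with hDdef
    have hiD : i ∈ D := Relation.ReflTransGen.refl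
    have hlastD : Fin.last n ∉ D := hine
    have hlastDK : Fin.last n ∈ DK := Relation.ReflTransGen.refl
    have hDdown : ∀ x ∈ D, ∀ y, 1 ≤ μ x y → p y ≤ p x → y ∈ D := by
      intro x hx y hμ hle
      have h2 := hsink x y hx hμ
      exact hx.tail ⟨hμ, le_antisymm h2 hle⟩
    have hSup : ∀ x, x ∉ DK → ∀ y, 1 ≤ μ x y → p x ≤ p y → y ∉ DK := by
      intro x hx y hμ hle hy
      exact hx (hy.tail ⟨by rw [hsym]; exact hμ, hle⟩)
    have hDKneg : ∀ x ∈ DK, p x ≤ 0 := by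
      intro x hx
      induction hx with
      | refl => exact le_of_eq hp.1
      | tail _ h ih => exact h.2.trans ih
    have hpD : ∀ x ∈ D, p x = p i := fun x hx => (pEquiv_p_eq hx).symm
    -- there is a vertex outside both DK and D
    have hx0 : ∃ x, x ∉ DK ∧ x ∉ D := by
      by_contra hno
      push_neg at hno
      -- hno : ∀ x, x ∉ DK → x ∈ D
      have hpos : 0 < p i := by
        by_contra hpi
        push_neg at hpi
        have : (1:ℝ) ≤ 0 := by
          rw [← hp.2]
          apply Finset.sum_nonpos
          intro j _
          by_cases hj : (j.castSucc : Fin (n+1)) ∈ D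
          · rw [hpD _ hj]; exact hpi
          · exact hDKneg _ (by by_contra h; exact hj (hno _ h))
        linarith
      obtain ⟨u, w, hu, hw, hr⟩ :=
        exists_crossing hlastD (hconn i trivial (Fin.last n) trivial) hiD
      have hwDK : w ∈ DK := by by_contra h; exact hw (hno _ h)
      have h1 : p u ≤ p w := hsink u w hu hr.2.2
      have h2 : p w ≤ 0 := hDKneg _ hwDK
      rw [hpD _ hu] at h1
      linarith
    obtain ⟨x₀, hx₀S, hx₀D⟩ := hx0
    -- the recession direction
    set Dfin : Finset (Fin (n+1)) := Finset.univ.filter (· ∈ D) with hDfin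
    set Sfin : Finset (Fin (n+1)) := Finset.univ.filter (· ∉ DK) with hSfin
    have hiDfin : i ∈ Dfin := by
      rw [hDfin, Finset.mem_filter]; exact ⟨Finset.mem_univ _, hiD⟩
    have hx₀Sfin : x₀ ∈ Sfin := by
      rw [hSfin, Finset.mem_filter]; exact ⟨Finset.mem_univ _, hx₀S⟩
    have hDcard : 0 < (Dfin.card : ℝ) := by
      exact_mod_cast Finset.card_pos.mpr ⟨i, hiDfin⟩
    have hScard : 0 < (Sfin.card : ℝ) := by
      exact_mod_cast Finset.card_pos.mpr ⟨x₀, hx₀Sfin⟩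
    set t : ℝ := (Dfin.card : ℝ) / (Sfin.card : ℝ) with ht
    have htpos : 0 < t := div_pos hDcard hScard
    set v : Fin (n+1) → ℝ :=
      fun x => (if x ∉ DK then t else 0) - (if x ∈ D then 1 else 0) with hv
    have hvlast : v (Fin.last n) = 0 := by
      show (if Fin.last n ∉ DK then t else 0) - (if Fin.last n ∈ D then 1 else 0) = 0
      rw [if_neg (not_not_intro hlastDK), if_neg hlastD, sub_zero]
    have hS : ∑ x : Fin (n+1), (if x ∉ DK then t else 0) = (Sfin.card : ℝ) * t := by
      rw [hSfin, ← Finset.sum_filter, Finset.sum_const, nsmul_eq_mul]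
    have hD : ∑ x : Fin (n+1), (if x ∈ D then (1:ℝ) else 0) = (Dfin.card : ℝ) := by
      rw [hDfin, ← Finset.sum_filter, Finset.sum_const, nsmul_eq_mul, mul_one]
    have hvsum : ∑ x : Fin (n+1), v x = 0 := by
      show ∑ x : Fin (n+1), ((if x ∉ DK then t else 0) - (if x ∈ D then 1 else 0)) = 0
      rw [Finset.sum_sub_distrib, hS, hD, ht, mul_comm,
        div_mul_cancel₀ _ (ne_of_gt hScard), sub_self]
    have hvmono : ∀ x y, 1 ≤ μ x y → p x < p y → v x ≤ v y := by
      intro x y hμ hlt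
      have h1 : (if x ∉ DK then t else 0) ≤ (if y ∉ DK then t else 0) := by
        by_cases hx : x ∉ DK
        · rw [if_pos hx, if_pos (hSup x hx y hμ hlt.le)]
        · rw [if_neg hx]
          by_cases hy : y ∉ DK
          · rw [if_pos hy]; exact htpos.le
          · rw [if_neg hy]
      have h2 : (if y ∈ D then (1:ℝ) else 0) ≤ (if x ∈ D then 1 else 0) := by
        by_cases hy : y ∈ D
        · rw [if_pos hy, if_pos (hDdown y hy x (by rw [hsym]; exact hμ) hlt.le)]
        · rw [if_neg hy]
          by_cases hx2 : x ∈ D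
          · rw [if_pos hx2]; norm_num
          · rw [if_neg hx2]
      exact sub_le_sub h1 h2
    have hveq : ∀ x y, 1 ≤ μ x y → p x = p y → v x = v y := by
      intro x y hμ heq
      have h1 : (x ∉ DK) ↔ (y ∉ DK) :=
        ⟨fun hx => hSup x hx y hμ heq.le,
         fun hy => hSup y hy x (by rw [hsym]; exact hμ) heq.ge⟩
      have h2 : (x ∈ D) ↔ (y ∈ D) :=
        ⟨fun hx => hDdown x hx y hμ heq.ge,
         fun hy => hDdown y hy x (by rw [hsym]; exact hμ) heq.le⟩
      show (if x ∉ DK then t else 0) - (if x ∈ D then 1 else 0) =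
        (if y ∉ DK then t else 0) - (if y ∈ D then 1 else 0)
      rw [if_congr h1 rfl rfl, if_congr h2 rfl rfl]
    have hray : ∀ r : ℝ, 0 ≤ r → (fun x => p x + r * v x) ∈ openCell μ p := by
      intro r hr
      refine ⟨⟨?_, ?_⟩, ?_⟩
      · show p (Fin.last n) + r * v (Fin.last n) = 0
        rw [hp.1, hvlast]; ring
      · have : ∑ j : Fin n, v j.castSucc = 0 := by
          have := Fin.sum_univ_castSucc v
          rw [hvsum, hvlast] at this
          linarith
        rw [Finset.sum_add_distrib, hp.2, ← Finset.mul_sum, this]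
        ring
      · intro x y hμ
        beta_reduce
        rcases lt_trichotomy (p x) (p y) with hlt | heq | hgt
        · have hq : p x + r * v x < p y + r * v y :=
            add_lt_add_of_lt_of_le hlt (mul_le_mul_of_nonneg_left (hvmono x y hμ hlt) hr)
          exact ⟨iff_of_true hq hlt, iff_of_false (ne_of_lt hq) (ne_of_lt hlt)⟩
        · have hq : p x + r * v x = p y + r * v y := by rw [heq, hveq x y hμ heq]
          exact ⟨iff_of_false (by rw [hq]; exact lt_irrefl _) (by rw [heq]; exact lt_irrefl _),
            iff_of_true hq heq⟩
        · have hμ' : 1 ≤ μ y x := by rw [hsym]; exact hμ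
          have hq : p y + r * v y < p x + r * v x :=
            add_lt_add_of_lt_of_le hgt (mul_le_mul_of_nonneg_left (hvmono y x hμ' hgt) hr)
          exact ⟨iff_of_false (not_lt_of_gt hq) (not_lt_of_gt hgt),
            iff_of_false (ne_of_gt hq) (ne_of_gt hgt)⟩
    -- derive contradiction with boundedness
    obtain ⟨C, hC⟩ := isBounded_iff_forall_norm_le.mp hB
    set r : ℝ := max 0 ((C + 1 - p x₀) / t) with hrdef
    have hr0 : 0 ≤ r := le_max_left _ _
    have hq := hC _ (hray r hr0)
    have hvx₀ : v x₀ = t := by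
      show (if x₀ ∉ DK then t else 0) - (if x₀ ∈ D then 1 else 0) = t
      rw [if_pos hx₀S, if_neg hx₀D, sub_zero]
    have hbig : C + 1 ≤ p x₀ + r * v x₀ := by
      rw [hvx₀]
      have : (C + 1 - p x₀) / t ≤ r := le_max_right _ _
      have := (div_le_iff₀ htpos).mp this
      linarith
    have hnorm : p x₀ + r * v x₀ ≤ C := by
      calc p x₀ + r * v x₀ ≤ |p x₀ + r * v x₀| := le_abs_self _
        _ ≤ ‖(fun x => p x + r * v x)‖ := by
            have h := norm_le_pi_norm (fun x => p x + r * v x) x₀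
            simpa using h
        _ ≤ C := hq
    linarith
  · -- condition → bounded
    intro hcond
    rw [isBounded_iff_forall_norm_le]
    refine ⟨1, fun q hq => ?_⟩
    have hnn : ∀ x, 0 ≤ q x := by
      obtain ⟨b, _, hb⟩ := Finset.exists_min_image Finset.univ q ⟨Fin.last n, Finset.mem_univ _⟩
      have hqb : q b = 0 := by
        by_cases hbe : pEquiv μ p b (Fin.last n)
        · rw [pEquiv_q_eq hq hbe, hq.1.1]
        · obtain ⟨i', j, hii', hμ, hpj⟩ := hcond b hbe
          have hqeq : q b = q i' := pEquiv_q_eq hq hii'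
          have hlt : q j < q i' := (hq.2 j i' (by rw [hsym]; exact hμ)).1.mpr hpj
          have := hb j (Finset.mem_univ j)
          linarith
      intro x
      have := hb x (Finset.mem_univ x)
      linarith
    have hle1 : ∀ x, q x ≤ 1 := by
      intro x
      by_cases hx : x = Fin.last n
      · rw [hx, hq.1.1]; norm_num
      · obtain ⟨y, rfl⟩ := Fin.exists_castSucc_eq.mpr hx
        calc q y.castSucc ≤ ∑ j : Fin n, q j.castSucc :=
              Finset.single_le_sum (fun j _ => hnn _) (Finset.mem_univ y)
          _ = 1 := hq.1.2
    rw [pi_norm_le_iff_of_nonneg (by norm_num : (0:ℝ) ≤ 1)]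
    intro x
    rw [Real.norm_eq_abs, abs_le]
    exact ⟨by linarith [hnn x], hle1 x⟩
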